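/- Let H be a bounded self-adjoint operator on a complex Hilbert space 𝓗, let ρ be a bounded operator on 𝓗, let λ ∈ ℝ, and let P be the orthogonal projection onto the eigenspace ker(H − λ·I). Then for every f ∈ 𝓗, (1/T)·∫₀^T e^{−itH} ρ e^{itH} P f dt converges in norm to P ρ P f as T → ∞. -/

import Mathlib

open ContinuousLinearMap Filter

variable {𝓗 : Type*} [NormedAddCommGroup 𝓗] [InnerProductSpace ℂ 𝓗] [CompleteSpace 𝓗]

open scoped Nat ComplexInnerProductSpace
open NormedSpace (exp)

private lemma pow_apply_eigen (B : 𝓗 →L[ℂ] 𝓗) (c : ℂ) (v : 𝓗) (h : B v = c • v) (n : ℕ) :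
    (B ^ n) v = c ^ n • v := by
  induction n with
  | zero => simp
  | succ n ih =>
    rw [pow_succ, ContinuousLinearMap.mul_apply, h, map_smul, ih, smul_smul, pow_succ,
      mul_comm]

private lemma exp_apply_eigen (B : 𝓗 →L[ℂ] 𝓗) (c : ℂ) (v : 𝓗) (h : B v = c • v) :
    exp B v = Complex.exp c • v := by
  have h1 : exp B v = ∑' n : ℕ, ((n !⁻¹ : ℂ) • B ^ n) v := by
    rw [NormedSpace.exp_eq_tsum ℂ]
    exact ((ContinuousLinearMap.apply ℂ 𝓗 v).map_tsum
      (NormedSpace.expSeries_summable' (𝕂 := ℂ) B))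
  rw [h1]
  have h2 : ∀ n : ℕ, ((n !⁻¹ : ℂ) • B ^ n) v = ((n !⁻¹ : ℂ) * c ^ n) • v := by
    intro n
    rw [ContinuousLinearMap.smul_apply, pow_apply_eigen B c v h, smul_smul]
  simp only [h2]
  have hs : Summable fun n : ℕ => (n !⁻¹ : ℂ) * c ^ n := by
    simpa [smul_eq_mul] using (NormedSpace.expSeries_summable' (𝕂 := ℂ) c)
  rw [hs.tsum_smul_const]
  congr 1
  rw [Complex.exp_eq_exp_ℂ, NormedSpace.exp_eq_tsum ℂ]
  simp [smul_eq_mul]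

private lemma exp_I_smul_isometry (B : 𝓗 →L[ℂ] 𝓗) (hB : IsSelfAdjoint B) (x : 𝓗) :
    ‖exp (Complex.I • B) x‖ = ‖x‖ := by
  set u := exp (Complex.I • B) with hu
  have hstar : star u * u = 1 := by
    have h1 : star u = exp ((-Complex.I) • B) := by
      rw [hu, NormedSpace.star_exp, star_smul, hB.star_eq, Complex.star_def, Complex.conj_I]
    letI : NormedAlgebra ℚ (𝓗 →L[ℂ] 𝓗) := NormedAlgebra.restrictScalars ℚ ℂ _
    rw [h1, ← NormedSpace.exp_add_of_commute (((Commute.refl B).smul_left _).smul_right _)]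
    simp [← add_smul, NormedSpace.exp_zero]
  have hinner : ⟪u x, u x⟫ = ⟪x, x⟫ := by
    have h2 : (ContinuousLinearMap.adjoint u) (u x) = x := by
      rw [← ContinuousLinearMap.star_eq_adjoint, ← ContinuousLinearMap.mul_apply, hstar,
        ContinuousLinearMap.one_apply]
    calc ⟪u x, u x⟫ = ⟪(ContinuousLinearMap.adjoint u) (u x), x⟫ := by
          rw [ContinuousLinearMap.adjoint_inner_left]
      _ = ⟪x, x⟫ := by rw [h2]
  have h4 : ‖u x‖ ^ 2 = ‖x‖ ^ 2 := by
    have h3 := hinner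
    rw [inner_self_eq_norm_sq_to_K, inner_self_eq_norm_sq_to_K] at h3
    exact_mod_cast h3
  nlinarith [norm_nonneg (u x), norm_nonneg x]

/-- The one-parameter group `e^{itA}` as a family of operators. -/
noncomputable def Uop (A : 𝓗 →L[ℂ] 𝓗) (t : ℝ) : 𝓗 →L[ℂ] 𝓗 :=
  exp ((Complex.I * t) • A)

private lemma Uop_isometry (A : 𝓗 →L[ℂ] 𝓗) (hA : IsSelfAdjoint A) (t : ℝ) (x : 𝓗) :
    ‖Uop A t x‖ = ‖x‖ := by
  have h1 : (Complex.I * t) • A = Complex.I • ((t : ℂ) • A) := by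
    rw [smul_smul]
  have h2 : IsSelfAdjoint ((t : ℂ) • A) := by
    simp [IsSelfAdjoint, star_smul, hA.star_eq, Complex.star_def, Complex.conj_ofReal]
  rw [Uop, h1]
  exact exp_I_smul_isometry _ h2 x

private lemma Uop_continuous (A : 𝓗 →L[ℂ] 𝓗) (x : 𝓗) :
    Continuous fun t : ℝ => Uop A t x := by
  letI : NormedAlgebra ℚ (𝓗 →L[ℂ] 𝓗) := NormedAlgebra.restrictScalars ℚ ℂ _
  exact (ContinuousLinearMap.apply ℂ 𝓗 x).continuous.comp
    (NormedSpace.exp_continuous.comp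
      ((continuous_const.mul Complex.continuous_ofReal).smul continuous_const))

private lemma Uop_mem_ker (A : 𝓗 →L[ℂ] 𝓗) (t : ℝ) (x : 𝓗) (hx : A x = 0) :
    Uop A t x = x := by
  have h : ((Complex.I * t) • A) x = (0 : ℂ) • x := by
    simp [ContinuousLinearMap.smul_apply, hx]
  simpa [Uop] using exp_apply_eigen _ 0 x h

private lemma Uop_hasDerivAt (A : 𝓗 →L[ℂ] 𝓗) (u : 𝓗) (t : ℝ) :
    HasDerivAt (fun s : ℝ => Uop A s u) (Complex.I • Uop A t (A u)) t := by
  have h1 : HasDerivAt (fun z : ℂ => exp (z • (Complex.I • A)))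
      (exp ((t : ℂ) • (Complex.I • A)) * (Complex.I • A)) (t : ℂ) :=
    hasDerivAt_exp_smul_const _ _
  have h2 : HasDerivAt (fun s : ℝ => exp ((s : ℂ) • (Complex.I • A)))
      (exp ((t : ℂ) • (Complex.I • A)) * (Complex.I • A)) t := by
    have h2' := HasDerivAt.scomp_of_eq (𝕜 := ℝ) t h1 Complex.ofRealCLM.hasDerivAt rfl
    simpa [Function.comp_def] using h2'
  have h3 : (fun s : ℝ => exp ((s : ℂ) • (Complex.I • A))) = fun s : ℝ => Uop A s := by
    funext s; rw [Uop, smul_smul, mul_comm]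
  rw [h3] at h2
  have h4 := ((ContinuousLinearMap.apply ℂ 𝓗 u).hasFDerivAt.restrictScalars ℝ).comp_hasDerivAt
    t h2
  have h5 : ((ContinuousLinearMap.apply ℂ 𝓗 u).restrictScalars ℝ)
      (exp ((t : ℂ) • (Complex.I • A)) * (Complex.I • A)) = Complex.I • Uop A t (A u) := by
    have he : (t : ℂ) • (Complex.I • A) = (Complex.I * t) • A := by rw [smul_smul, mul_comm]
    simp only [he]
    show (exp ((Complex.I * (t : ℂ)) • A) * (Complex.I • A)) u = Complex.I • Uop A t (A u)
    rw [ContinuousLinearMap.mul_apply, ContinuousLinearMap.smul_apply, map_smul]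
    rfl
  rw [h5] at h4
  exact h4

private lemma Uop_integral_eq (A : 𝓗 →L[ℂ] 𝓗) (u : 𝓗) (T : ℝ) :
    (∫ t in (0:ℝ)..T, Uop A t (A u)) = (-Complex.I) • (Uop A T u - u) := by
  have hint : IntervalIntegrable (fun t : ℝ => Complex.I • Uop A t (A u))
      MeasureTheory.volume 0 T :=
    ((Uop_continuous A (A u)).const_smul Complex.I).intervalIntegrable 0 T
  have h1 : (∫ t in (0:ℝ)..T, Complex.I • Uop A t (A u)) = Uop A T u - Uop A 0 u :=
    intervalIntegral.integral_eq_sub_of_hasDerivAt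
      (fun t _ => Uop_hasDerivAt A u t) hint
  have h0 : Uop A 0 u = u := by
    simp [Uop, NormedSpace.exp_zero]
  rw [intervalIntegral.integral_smul] at h1
  rw [h0] at h1
  rw [← h1, smul_smul]
  simp

private lemma mean_ergodic_aux (A : 𝓗 →L[ℂ] 𝓗) (hA : IsSelfAdjoint A) (h : 𝓗)
    (hh : h ∈ (LinearMap.ker (A : 𝓗 →ₗ[ℂ] 𝓗) : Submodule ℂ 𝓗)ᗮ) :
    Tendsto (fun T : ℝ => (1 / T) • ∫ t in (0:ℝ)..T, Uop A t h) atTop (nhds 0) := by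
  -- h is in the closure of the range of A
  have e1 : (LinearMap.range (A : 𝓗 →ₗ[ℂ] 𝓗) : Submodule ℂ 𝓗)ᗮ = LinearMap.ker (A : 𝓗 →ₗ[ℂ] 𝓗) := by
    ext x
    simp only [Submodule.mem_orthogonal, LinearMap.mem_ker, LinearMap.mem_range, ContinuousLinearMap.coe_coe]
    constructor
    · intro hx
      refine ext_inner_left ℂ fun v => ?_
      rw [inner_zero_right, ← ContinuousLinearMap.adjoint_inner_left, hA.adjoint_eq]
      exact hx _ ⟨v, rfl⟩
    · rintro hx u ⟨y, rfl⟩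
      rw [← hA.adjoint_eq, ContinuousLinearMap.adjoint_inner_left, hx, inner_zero_right]
  have hclos : h ∈ closure ((LinearMap.range (A : 𝓗 →ₗ[ℂ] 𝓗) : Submodule ℂ 𝓗) : Set 𝓗) := by
    have : h ∈ (LinearMap.range (A : 𝓗 →ₗ[ℂ] 𝓗) : Submodule ℂ 𝓗).topologicalClosure := by
      rw [← Submodule.orthogonal_orthogonal_eq_closure, e1]
      exact hh
    exact this
  rw [NormedAddCommGroup.tendsto_nhds_zero]
  intro ε hε
  obtain ⟨y, hy, hdist⟩ := Metric.mem_closure_iff.mp hclos (ε / 2) (by positivity)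
  obtain ⟨u, rfl⟩ := hy
  rw [eventually_atTop]
  refine ⟨max 1 (4 * ‖u‖ / ε + 1), fun T hT => ?_⟩
  have hT1 : (1 : ℝ) ≤ T := le_trans (le_max_left _ _) hT
  have hT0 : 0 < T := lt_of_lt_of_le one_pos hT1
  have hTu : 4 * ‖u‖ / ε + 1 ≤ T := le_trans (le_max_right _ _) hT
  have int1 : IntervalIntegrable (fun t : ℝ => Uop A t (h - A u))
      MeasureTheory.volume 0 T := (Uop_continuous A _).intervalIntegrable 0 T
  have int2 : IntervalIntegrable (fun t : ℝ => Uop A t (A u))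
      MeasureTheory.volume 0 T := (Uop_continuous A _).intervalIntegrable 0 T
  have hsplit : (∫ t in (0:ℝ)..T, Uop A t h)
      = (∫ t in (0:ℝ)..T, Uop A t (h - A u)) + ∫ t in (0:ℝ)..T, Uop A t (A u) := by
    rw [← intervalIntegral.integral_add int1 int2]
    congr 1
    funext t
    rw [← map_add, sub_add_cancel]
  have hnorm : ‖h - A u‖ < ε / 2 := by
    rw [← dist_eq_norm]; exact hdist
  have hbound1 : ‖∫ t in (0:ℝ)..T, Uop A t (h - A u)‖ ≤ ε / 2 * |T - 0| := by
    apply intervalIntegral.norm_integral_le_of_norm_le_const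
    intro x _
    rw [Uop_isometry A hA]
    exact hnorm.le
  have hbound2 : ‖∫ t in (0:ℝ)..T, Uop A t (A u)‖ ≤ 2 * ‖u‖ := by
    rw [Uop_integral_eq, norm_smul]
    simp only [norm_neg, Complex.norm_I, one_mul]
    calc ‖Uop A T u - u‖ ≤ ‖Uop A T u‖ + ‖u‖ := norm_sub_le _ _
      _ = 2 * ‖u‖ := by rw [Uop_isometry A hA]; ring
  rw [hsplit, norm_smul, Real.norm_eq_abs, abs_of_pos (by positivity : (0:ℝ) < 1 / T)]
  have hb : ‖(∫ t in (0:ℝ)..T, Uop A t (h - A u)) + ∫ t in (0:ℝ)..T, Uop A t (A u)‖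
      ≤ ε / 2 * T + 2 * ‖u‖ := by
    calc _ ≤ ‖∫ t in (0:ℝ)..T, Uop A t (h - A u)‖ + ‖∫ t in (0:ℝ)..T, Uop A t (A u)‖ :=
          norm_add_le _ _
      _ ≤ ε / 2 * T + 2 * ‖u‖ := by
          rw [sub_zero, abs_of_pos hT0] at hbound1
          exact add_le_add hbound1 hbound2
  calc 1 / T * ‖_‖ ≤ 1 / T * (ε / 2 * T + 2 * ‖u‖) := by
        apply mul_le_mul_of_nonneg_left hb (by positivity)
    _ < ε := by
        rw [div_mul_eq_mul_div, one_mul, div_lt_iff₀ hT0]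
        have h3 : 4 * ‖u‖ / ε < T := lt_of_lt_of_le (by linarith) hTu
        rw [div_lt_iff₀ hε] at h3
        nlinarith

theorem ergodic_mean_tendsto_eigenprojection
    (H ρ P : 𝓗 →L[ℂ] 𝓗) (hH : IsSelfAdjoint H) (lam : ℝ)
    (hP₁ : IsIdempotentElem P) (hP₂ : IsSelfAdjoint P)
    (hP₃ : LinearMap.range (P : 𝓗 →ₗ[ℂ] 𝓗) = LinearMap.ker ((H - (lam : ℂ) • (1 : 𝓗 →L[ℂ] 𝓗) : 𝓗 →L[ℂ] 𝓗) : 𝓗 →ₗ[ℂ] 𝓗))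
    (f : 𝓗) :
    Tendsto (fun T : ℝ => (1 / T) •
        ∫ t in (0 : ℝ)..T,
          (NormedSpace.exp ((-(Complex.I * (t : ℂ))) • H))
            (ρ ((NormedSpace.exp ((Complex.I * (t : ℂ)) • H)) (P f))))
      atTop (nhds (P (ρ (P f)))) := by
  set A : 𝓗 →L[ℂ] 𝓗 := (lam : ℂ) • 1 - H with hAdef
  set g : 𝓗 := ρ (P f) with hgdef
  have hAsa : IsSelfAdjoint A := by
    have : star A = A := by
      rw [hAdef, star_sub, star_smul, hH.star_eq, star_one, Complex.star_def,
        Complex.conj_ofReal]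
    exact this
  have hker : ∀ x : 𝓗, A x = 0 ↔ x ∈ LinearMap.range (P : 𝓗 →ₗ[ℂ] 𝓗) := by
    intro x
    rw [hP₃]
    have e : A x = (lam : ℂ) • x - H x := by
      simp [hAdef, ContinuousLinearMap.sub_apply]
    constructor
    · intro hx
      show H x - (lam : ℂ) • x = 0
      rw [e, sub_eq_zero] at hx
      rw [sub_eq_zero]
      exact hx.symm
    · intro hx
      have hx' : H x - (lam : ℂ) • x = 0 := hx
      rw [sub_eq_zero] at hx'
      rw [e, sub_eq_zero]
      exact hx'.symm
  have hPf : H (P f) = (lam : ℂ) • P f := by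
    have h1 : P f ∈ LinearMap.ker ((H - (lam : ℂ) • (1 : 𝓗 →L[ℂ] 𝓗) : 𝓗 →L[ℂ] 𝓗) : 𝓗 →ₗ[ℂ] 𝓗) := by
      rw [← hP₃]; exact LinearMap.mem_range_self (P : 𝓗 →ₗ[ℂ] 𝓗) f
    have h2 : H (P f) - (lam : ℂ) • (P f) = 0 := h1
    rw [sub_eq_zero] at h2
    exact h2
  have hred : ∀ t : ℝ,
      (NormedSpace.exp ((-(Complex.I * (t : ℂ))) • H))
        (ρ ((NormedSpace.exp ((Complex.I * (t : ℂ)) • H)) (P f))) = Uop A t g := by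
    intro t
    have e1 : NormedSpace.exp ((Complex.I * (t : ℂ)) • H) (P f)
        = Complex.exp (Complex.I * t * lam) • P f := by
      apply exp_apply_eigen
      rw [ContinuousLinearMap.smul_apply, hPf, smul_smul]
    have e2 : (Complex.I * (t : ℂ)) • A
        = ((Complex.I * t * lam) • (1 : 𝓗 →L[ℂ] 𝓗)) + ((-(Complex.I * (t : ℂ))) • H) := by
      rw [hAdef, smul_sub, smul_smul, neg_smul, sub_eq_add_neg]
    have e3 : Uop A t = NormedSpace.exp ((Complex.I * t * lam) • (1 : 𝓗 →L[ℂ] 𝓗))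
        * NormedSpace.exp ((-(Complex.I * (t : ℂ))) • H) := by
      rw [Uop, e2]
      letI : NormedAlgebra ℚ (𝓗 →L[ℂ] 𝓗) := NormedAlgebra.restrictScalars ℚ ℂ _
      exact NormedSpace.exp_add_of_commute (((Commute.one_left H).smul_left _).smul_right _)
    rw [e1, map_smul, map_smul, e3, ContinuousLinearMap.mul_apply,
      exp_apply_eigen ((Complex.I * t * lam) • (1 : 𝓗 →L[ℂ] 𝓗)) (Complex.I * t * lam) _
        (by simp)]
  simp only [hred]
  have hPg : A (P g) = 0 := (hker (P g)).mpr ⟨g, rfl⟩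
  have hmem : g - P g ∈ ((LinearMap.ker (A : 𝓗 →ₗ[ℂ] 𝓗) : Submodule ℂ 𝓗))ᗮ := by
    rw [Submodule.mem_orthogonal]
    intro v hv
    have hv' : A v = 0 := hv
    obtain ⟨w, rfl⟩ := (hker v).mp hv'
    have h0 : P (g - P g) = 0 := by
      rw [map_sub, ← ContinuousLinearMap.mul_apply P P, hP₁.eq, sub_self]
    have hadj := ContinuousLinearMap.adjoint_inner_left P (g - P g) w
    rw [hP₂.adjoint_eq] at hadj
    rw [ContinuousLinearMap.coe_coe, hadj, h0, inner_zero_right]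
  have haux := mean_ergodic_aux A hAsa (g - P g) hmem
  have hdecomp : ∀ T : ℝ, (1 / T) • (∫ t in (0:ℝ)..T, Uop A t g)
      = (1 / T) • ((T : ℝ) • P g) + (1 / T) • ∫ t in (0:ℝ)..T, Uop A t (g - P g) := by
    intro T
    have i1 : IntervalIntegrable (fun t : ℝ => Uop A t (P g)) MeasureTheory.volume 0 T :=
      (Uop_continuous A _).intervalIntegrable 0 T
    have i2 : IntervalIntegrable (fun t : ℝ => Uop A t (g - P g)) MeasureTheory.volume 0 T :=
      (Uop_continuous A _).intervalIntegrable 0 T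
    have e4 : (∫ t in (0:ℝ)..T, Uop A t g)
        = (∫ t in (0:ℝ)..T, Uop A t (P g)) + ∫ t in (0:ℝ)..T, Uop A t (g - P g) := by
      rw [← intervalIntegral.integral_add i1 i2]
      congr 1
      funext t
      rw [← map_add, add_sub_cancel]
    have e5 : (∫ t in (0:ℝ)..T, Uop A t (P g)) = (T : ℝ) • P g := by
      have hc : ∀ t : ℝ, Uop A t (P g) = P g := fun t => Uop_mem_ker A t _ hPg
      simp only [hc, intervalIntegral.integral_const, sub_zero]
    rw [e4, e5, smul_add]
  simp only [hdecomp]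
  have l1 : Tendsto (fun T : ℝ => (1 / T) • ((T : ℝ) • P g)) atTop (nhds (P g)) := by
    have hEq : (fun _ : ℝ => P g) =ᶠ[atTop] fun T : ℝ => (1 / T) • ((T : ℝ) • P g) := by
      filter_upwards [eventually_gt_atTop (0 : ℝ)] with T hT
      rw [smul_smul, one_div, inv_mul_cancel₀ hT.ne', one_smul]
    exact Tendsto.congr' hEq tendsto_const_nhds
  simpa using l1.add haux
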